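/- Let e₁, e₂ be the standard orthonormal basis of ℂ² and ρ_singlet = |ψ⟩⟨ψ| with ψ = (e₁⊗e₂ − e₂⊗e₁)/√2 the two-qubit singlet state on ℂ²⊗ℂ². The Hermitian operator T on (ℂ²)^{⊗3} defined by T = (1/2)|e₁⟩⟨e₁|⊗|e₂⟩⟨e₂|⊗|e₂⟩⟨e₂| + (1/2)|e₂⟩⟨e₂|⊗|e₁⟩⟨e₁|⊗|e₁⟩⟨e₁| − (1/4)|e₁⟩⟨e₂|⊗|e₂⟩⟨e₁|⊗I − (1/4)|e₂⟩⟨e₁|⊗|e₁⟩⟨e₂|⊗I − (1/4)|e₁⟩⟨e₂|⊗I⊗|e₂⟩⟨e₁| − (1/4)|e₂⟩⟨e₁|⊗I⊗|e₁⟩⟨e₂| is a 1×2-setting source operator for ρ_singlet, its eigenvalues are 0 (multiplicity 4), (1−√3)/4 (multiplicity 2) and (1+√3)/4 (multiplicity 2), and its trace norm equals √3. -/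

import Mathlib

open scoped Matrix Kronecker ComplexOrder

namespace Singlet

/-- The absolute value `√(Wᴴ W)` of a matrix. -/
noncomputable def matAbs {n : Type} [Fintype n] [DecidableEq n]
    (W : Matrix n n ℂ) : Matrix n n ℂ :=
  let hA := Matrix.posSemidef_conjTranspose_mul_self W
  (hA.1.eigenvectorUnitary : Matrix n n ℂ) *
    Matrix.diagonal ((↑) ∘ (Real.sqrt ∘ hA.1.eigenvalues)) *
    (star hA.1.eigenvectorUnitary : Matrix n n ℂ)

/-- The trace norm `‖W‖₁ := tr √(Wᴴ W)`. -/
noncomputable def traceNorm {n : Type} [Fintype n] [DecidableEq n]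
    (W : Matrix n n ℂ) : ℝ :=
  ((matAbs W).trace).re

/-- The standard orthonormal basis vectors `e₁, e₂` of `ℂ²`. -/
def e (i : Fin 2) : Fin 2 → ℂ := fun j => if j = i then 1 else 0

/-- The singlet vector `ψ = (e₁ ⊗ e₂ − e₂ ⊗ e₁)/√2`. -/
noncomputable def ψsinglet : Fin 2 × Fin 2 → ℂ := fun p =>
  (e 0 p.1 * e 1 p.2 - e 1 p.1 * e 0 p.2) / (Real.sqrt 2 : ℂ)

/-- The two-qubit singlet state `ρ_singlet = |ψ⟩⟨ψ|` on `ℂ² ⊗ ℂ²`. -/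
noncomputable def ρsinglet : Matrix (Fin 2 × Fin 2) (Fin 2 × Fin 2) ℂ :=
  Matrix.vecMulVec ψsinglet (star ψsinglet)

/-- The matrix units `|e_i⟩⟨e_j|` on `ℂ²`. -/
def E (i j : Fin 2) : Matrix (Fin 2) (Fin 2) ℂ := Matrix.single i j 1

/-- The `1×2`-setting source operator for the singlet, on `(ℂ²)^{⊗3}`. -/
noncomputable def Tsinglet : Matrix (Fin 2 × Fin 2 × Fin 2) (Fin 2 × Fin 2 × Fin 2) ℂ :=
  (2⁻¹ : ℂ) • (E 0 0 ⊗ₖ (E 1 1 ⊗ₖ E 1 1)) + (2⁻¹ : ℂ) • (E 1 1 ⊗ₖ (E 0 0 ⊗ₖ E 0 0))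
    - (4⁻¹ : ℂ) • (E 0 1 ⊗ₖ (E 1 0 ⊗ₖ 1)) - (4⁻¹ : ℂ) • (E 1 0 ⊗ₖ (E 0 1 ⊗ₖ 1))
    - (4⁻¹ : ℂ) • (E 0 1 ⊗ₖ (1 ⊗ₖ E 1 0)) - (4⁻¹ : ℂ) • (E 1 0 ⊗ₖ (1 ⊗ₖ E 0 1))

end Singlet

namespace SingletAux

open Singlet

noncomputable def ftab (n m : ℕ) : ℂ :=
  if n = 3 then (if m = 3 then 2⁻¹ else if m = 5 then -4⁻¹ else if m = 6 then -4⁻¹ else 0)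
  else if n = 4 then (if m = 4 then 2⁻¹ else if m = 1 then -4⁻¹ else if m = 2 then -4⁻¹ else 0)
  else if n = 2 then (if m = 4 then -4⁻¹ else 0)
  else if n = 1 then (if m = 4 then -4⁻¹ else 0)
  else if n = 5 then (if m = 3 then -4⁻¹ else 0)
  else if n = 6 then (if m = 3 then -4⁻¹ else 0)
  else 0

noncomputable def gtab (n m : ℕ) : ℂ :=
  if n = 1 then (if m = 1 then 16⁻¹ else if m = 2 then 16⁻¹ else if m = 4 then -8⁻¹ else 0)
  else if n = 2 then (if m = 1 then 16⁻¹ else if m = 2 then 16⁻¹ else if m = 4 then -8⁻¹ else 0)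
  else if n = 3 then (if m = 3 then 3/8 else if m = 5 then -8⁻¹ else if m = 6 then -8⁻¹ else 0)
  else if n = 4 then (if m = 1 then -8⁻¹ else if m = 2 then -8⁻¹ else if m = 4 then 3/8 else 0)
  else if n = 5 then (if m = 3 then -8⁻¹ else if m = 5 then 16⁻¹ else if m = 6 then 16⁻¹ else 0)
  else if n = 6 then (if m = 3 then -8⁻¹ else if m = 5 then 16⁻¹ else if m = 6 then 16⁻¹ else 0)
  else 0

noncomputable def f (p q : Fin 2 × Fin 2 × Fin 2) : ℂ :=
  ftab (4*p.1.val+2*p.2.1.val+p.2.2.val) (4*q.1.val+2*q.2.1.val+q.2.2.val)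

noncomputable def g (p q : Fin 2 × Fin 2 × Fin 2) : ℂ :=
  gtab (4*p.1.val+2*p.2.1.val+p.2.2.val) (4*q.1.val+2*q.2.1.val+q.2.2.val)

noncomputable def rtab (n m : ℕ) : ℂ :=
  if n = 1 then (if m = 1 then 2⁻¹ else if m = 2 then -2⁻¹ else 0)
  else if n = 2 then (if m = 1 then -2⁻¹ else if m = 2 then 2⁻¹ else 0)
  else 0

noncomputable def r (p q : Fin 2 × Fin 2) : ℂ :=
  rtab (2*p.1.val+p.2.val) (2*q.1.val+q.2.val)

set_option maxHeartbeats 1000000 in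
lemma Tf : Tsinglet = Matrix.of f := by
  rw [← Matrix.ext_iff]
  simp only [Prod.forall, Fin.forall_fin_two, Tsinglet, E, Matrix.sub_apply, Matrix.add_apply,
    Matrix.smul_apply, Matrix.kroneckerMap_apply, Matrix.of_apply, smul_eq_mul,
    Matrix.single, Matrix.one_apply, f, ftab]
  norm_num

set_option maxHeartbeats 1000000 in
lemma hs2 : (Real.sqrt 2 : ℂ) * (Real.sqrt 2 : ℂ) = 2 := by
  rw [← Complex.ofReal_mul, Real.mul_self_sqrt (by norm_num)]
  norm_num

set_option maxHeartbeats 1000000 in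
lemma ρf : ρsinglet = Matrix.of r := by
  have h2 : (Real.sqrt 2 : ℂ) ≠ 0 := by
    intro h
    have := hs2
    rw [h] at this
    norm_num at this
  rw [← Matrix.ext_iff]
  simp only [Prod.forall, Fin.forall_fin_two, ρsinglet, Matrix.vecMulVec_apply, Pi.star_apply,
    ψsinglet, e, Matrix.of_apply, r, rtab]
  norm_num [div_mul_div_comm, hs2]
  refine ⟨⟨?_, ?_⟩, ?_⟩ <;> field_simp
  · linear_combination (-1 : ℂ) * hs2
  · linear_combination hs2
  · linear_combination hs2

set_option maxHeartbeats 2000000 in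
lemma mul2 : Matrix.of f * Matrix.of f = Matrix.of g := by
  rw [← Matrix.ext_iff]
  simp only [Prod.forall, Fin.forall_fin_two, Matrix.mul_apply, Fintype.sum_prod_type,
    Fin.sum_univ_two, Matrix.of_apply, f, g, ftab, gtab]
  norm_num

set_option maxHeartbeats 2000000 in
lemma mul3 : Matrix.of g * Matrix.of f = (2⁻¹ : ℂ) • Matrix.of g + (8⁻¹ : ℂ) • Matrix.of f := by
  rw [← Matrix.ext_iff]
  simp only [Prod.forall, Fin.forall_fin_two, Matrix.mul_apply, Fintype.sum_prod_type,
    Fin.sum_univ_two, Matrix.of_apply, Matrix.add_apply, Matrix.smul_apply, smul_eq_mul,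
    f, g, ftab, gtab]
  norm_num

set_option maxHeartbeats 1000000 in
lemma fherm : (Matrix.of f).IsHermitian := by
  rw [Matrix.IsHermitian, ← Matrix.ext_iff]
  simp only [Prod.forall, Fin.forall_fin_two, Matrix.conjTranspose_apply, Matrix.of_apply,
    f, ftab]
  norm_num

lemma ftrace : (Matrix.of f).trace = 1 := by
  simp only [Matrix.trace, Matrix.diag, Fintype.sum_prod_type, Fin.sum_univ_two,
    Matrix.of_apply, f, ftab]
  norm_num

lemma gtrace : (Matrix.of g).trace = 1 := by
  simp only [Matrix.trace, Matrix.diag, Fintype.sum_prod_type, Fin.sum_univ_two,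
    Matrix.of_apply, g, gtab]
  norm_num

set_option maxHeartbeats 2000000 in
lemma traceA (X₁ X₂ : Matrix (Fin 2) (Fin 2) ℂ) :
    (Matrix.of f * (X₁ ⊗ₖ (X₂ ⊗ₖ (1 : Matrix (Fin 2) (Fin 2) ℂ)))).trace
      = (Matrix.of r * (X₁ ⊗ₖ X₂)).trace := by
  simp only [Matrix.trace, Matrix.diag, Matrix.mul_apply, Fintype.sum_prod_type,
    Fin.sum_univ_two, Matrix.of_apply, Matrix.kroneckerMap_apply, Matrix.one_apply,
    f, ftab, r, rtab]
  norm_num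
  ring

set_option maxHeartbeats 2000000 in
lemma traceB (X₁ X₂ : Matrix (Fin 2) (Fin 2) ℂ) :
    (Matrix.of f * (X₁ ⊗ₖ ((1 : Matrix (Fin 2) (Fin 2) ℂ) ⊗ₖ X₂))).trace
      = (Matrix.of r * (X₁ ⊗ₖ X₂)).trace := by
  simp only [Matrix.trace, Matrix.diag, Matrix.mul_apply, Fintype.sum_prod_type,
    Fin.sum_univ_two, Matrix.of_apply, Matrix.kroneckerMap_apply, Matrix.one_apply,
    f, ftab, r, rtab]
  norm_num
  ring

end SingletAux
namespace SingletAux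
open Singlet Matrix

lemma Therm : Tsinglet.IsHermitian := by rw [Tf]; exact fherm

lemma Tcube : Tsinglet * Tsinglet * Tsinglet
    = (2⁻¹ : ℂ) • (Tsinglet * Tsinglet) + (8⁻¹ : ℂ) • Tsinglet := by
  rw [Tf, mul2, mul3, ← mul2]

noncomputable def ev : Fin 2 × Fin 2 × Fin 2 → ℝ := Therm.eigenvalues

noncomputable def U : Matrix (Fin 2 × Fin 2 × Fin 2) (Fin 2 × Fin 2 × Fin 2) ℂ :=
  (Matrix.IsHermitian.eigenvectorUnitary Therm : Matrix (Fin 2 × Fin 2 × Fin 2) (Fin 2 × Fin 2 × Fin 2) ℂ)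

noncomputable def d : Fin 2 × Fin 2 × Fin 2 → ℂ := RCLike.ofReal ∘ ev

noncomputable def D : Matrix (Fin 2 × Fin 2 × Fin 2) (Fin 2 × Fin 2 × Fin 2) ℂ :=
  Matrix.diagonal d

lemma hd : d = fun j => ((ev j : ℝ) : ℂ) := rfl

lemma hU1 : star U * U = 1 := by
  have h := (Matrix.IsHermitian.eigenvectorUnitary Therm).2
  rw [Matrix.mem_unitaryGroup_iff'] at h
  exact h

lemma hU2 : U * star U = 1 := by
  have h := (Matrix.IsHermitian.eigenvectorUnitary Therm).2
  rw [Matrix.mem_unitaryGroup_iff] at h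
  exact h

lemma hspec : Tsinglet = U * D * star U := Therm.spectral_theorem

lemma conjmul (A B : Matrix (Fin 2 × Fin 2 × Fin 2) (Fin 2 × Fin 2 × Fin 2) ℂ) :
    (U * A * star U) * (U * B * star U) = U * (A * B) * star U := by
  have h : star U * (U * (B * star U)) = B * star U := by
    rw [← Matrix.mul_assoc, hU1, Matrix.one_mul]
  calc (U * A * star U) * (U * B * star U)
      = U * (A * (star U * (U * (B * star U)))) := by simp only [Matrix.mul_assoc]
    _ = U * (A * (B * star U)) := by rw [h]
    _ = U * (A * B) * star U := by simp only [Matrix.mul_assoc]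

lemma sandwich (A : Matrix (Fin 2 × Fin 2 × Fin 2) (Fin 2 × Fin 2 × Fin 2) ℂ) :
    star U * (U * A * star U) * U = A := by
  simp only [Matrix.mul_assoc]
  rw [hU1, Matrix.mul_one, ← Matrix.mul_assoc, hU1, Matrix.one_mul]

lemma Dcube : D * D * D = (2⁻¹ : ℂ) • (D * D) + (8⁻¹ : ℂ) • D := by
  have lhs : Tsinglet * Tsinglet * Tsinglet = U * (D * D * D) * star U := by
    rw [hspec, conjmul, conjmul]
  have rhs : (2⁻¹ : ℂ) • (Tsinglet * Tsinglet) + (8⁻¹ : ℂ) • Tsinglet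
      = U * ((2⁻¹ : ℂ) • (D * D) + (8⁻¹ : ℂ) • D) * star U := by
    rw [hspec, conjmul]
    simp only [Matrix.mul_add, Matrix.add_mul, Matrix.mul_smul, Matrix.smul_mul]
  have h1 : U * (D * D * D) * star U
      = U * ((2⁻¹ : ℂ) • (D * D) + (8⁻¹ : ℂ) • D) * star U := by
    rw [← lhs, ← rhs]; exact Tcube
  have h2 := congrArg (fun M => star U * M * U) h1
  simpa only [sandwich] using h2

lemma cubic (i : Fin 2 × Fin 2 × Fin 2) : ev i ^ 3 = (ev i) ^ 2 / 2 + ev i / 8 := by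
  have h := Dcube
  rw [D, Matrix.diagonal_mul_diagonal, Matrix.diagonal_mul_diagonal, ← Matrix.ext_iff] at h
  have h3 := h i i
  simp only [Matrix.diagonal_apply_eq, Matrix.add_apply, Matrix.smul_apply, Pi.mul_apply,
    smul_eq_mul, hd] at h3
  have h4 : ((ev i ^ 3 : ℝ) : ℂ) = ((ev i ^ 2 / 2 + ev i / 8 : ℝ) : ℂ) := by
    push_cast
    linear_combination h3
  exact_mod_cast h4

lemma trace1 : ∑ i, ev i = 1 := by
  have h := congrArg Matrix.trace hspec
  rw [Tf, ftrace, Matrix.trace_mul_cycle, hU1, Matrix.one_mul, D, Matrix.trace_diagonal] at h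
  simp only [hd] at h
  have h2 : ((∑ i, ev i : ℝ) : ℂ) = ((1 : ℝ) : ℂ) := by
    push_cast
    rw [← h]
  exact_mod_cast h2

lemma trace2 : ∑ i, ev i ^ 2 = 1 := by
  have hTT : Tsinglet * Tsinglet = U * (D * D) * star U := by rw [hspec, conjmul]
  have h := congrArg Matrix.trace hTT
  rw [Tf, mul2, gtrace, Matrix.trace_mul_cycle, hU1, Matrix.one_mul, D,
    Matrix.diagonal_mul_diagonal, Matrix.trace_diagonal] at h
  simp only [hd, Pi.mul_apply] at h
  have h2 : ((∑ i, ev i ^ 2 : ℝ) : ℂ) = ((1 : ℝ) : ℂ) := by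
    push_cast
    simp only [pow_two]
    rw [← h]
  exact_mod_cast h2

lemma roots (i : Fin 2 × Fin 2 × Fin 2) :
    ev i = 0 ∨ ev i = (1 - Real.sqrt 3) / 4 ∨ ev i = (1 + Real.sqrt 3) / 4 := by
  have h3 : Real.sqrt 3 ^ 2 = 3 := Real.sq_sqrt (by norm_num)
  have hx : ev i * (ev i - (1 - Real.sqrt 3) / 4) * (ev i - (1 + Real.sqrt 3) / 4) = 0 := by
    linear_combination cubic i - ev i / 16 * h3
  rcases mul_eq_zero.mp hx with h | h
  · rcases mul_eq_zero.mp h with h | h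
    · exact Or.inl h
    · exact Or.inr (Or.inl (sub_eq_zero.mp h))
  · exact Or.inr (Or.inr (sub_eq_zero.mp h))

end SingletAux
namespace SingletAux
open Singlet Matrix

lemma Mset :
    (Finset.univ.val.map ev : Multiset ℝ) =
      Multiset.replicate 4 (0 : ℝ) +
        Multiset.replicate 2 ((1 - Real.sqrt 3) / 4) +
        Multiset.replicate 2 ((1 + Real.sqrt 3) / 4) := by
  classical
  set s := Real.sqrt 3 with hsdef
  set a := (1 - s) / 4 with hadef
  set b := (1 + s) / 4 with hbdef
  set M : Multiset ℝ := Finset.univ.val.map ev with hMdef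
  have hmem : ∀ x ∈ M, x = 0 ∨ x = a ∨ x = b := by
    intro x hx
    obtain ⟨i, _, rfl⟩ := Multiset.mem_map.mp hx
    exact roots i
  set M0 := M.filter (fun x => x = 0) with hM0
  set Mr := M.filter (fun x => ¬ x = 0) with hMr
  set Ma := Mr.filter (fun x => x = a) with hMa
  set Mb := Mr.filter (fun x => ¬ x = a) with hMb
  have hdec : M0 + (Ma + Mb) = M := by
    rw [hMa, hMb, Multiset.filter_add_not, hM0, hMr, Multiset.filter_add_not]
  have h0 : M0 = Multiset.replicate (Multiset.card M0) 0 :=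
    Multiset.eq_replicate_card.mpr (fun x hx => (Multiset.mem_filter.mp hx).2)
  have ha : Ma = Multiset.replicate (Multiset.card Ma) a :=
    Multiset.eq_replicate_card.mpr (fun x hx => (Multiset.mem_filter.mp hx).2)
  have hb : Mb = Multiset.replicate (Multiset.card Mb) b := by
    refine Multiset.eq_replicate_card.mpr (fun x hx => ?_)
    have h1 := Multiset.mem_filter.mp hx
    have h2 := Multiset.mem_filter.mp h1.1
    rcases hmem x h2.1 with h | h | h
    · exact absurd h h2.2
    · exact absurd h h1.2
    · exact h
  set n0 := Multiset.card M0 with hn0def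
  set na := Multiset.card Ma with hnadef
  set nb := Multiset.card Mb with hnbdef
  have hcard : n0 + (na + nb) = 8 := by
    have hc : Multiset.card M = 8 := by rw [hMdef]; simp
    rw [← hdec] at hc
    simpa using hc
  have hsumM : M.sum = 1 := by
    rw [hMdef, ← Finset.sum_eq_multiset_sum]
    exact trace1
  have hsumsqM : (M.map (fun x => x ^ 2)).sum = 1 := by
    rw [hMdef, Multiset.map_map, ← Finset.sum_eq_multiset_sum]
    simpa [Function.comp] using trace2
  rw [← hdec] at hsumM hsumsqM
  have hsum1 : (na : ℝ) * a + (nb : ℝ) * b = 1 := by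
    rw [h0, ha, hb] at hsumM
    simpa [Multiset.sum_replicate, nsmul_eq_mul] using hsumM
  have hsum2 : (na : ℝ) * a ^ 2 + (nb : ℝ) * b ^ 2 = 1 := by
    rw [h0, ha, hb] at hsumsqM
    simpa [Multiset.map_add, Multiset.map_replicate, Multiset.sum_replicate,
      nsmul_eq_mul] using hsumsqM
  have h3 : s ^ 2 = 3 := Real.sq_sqrt (by norm_num)
  have hs0 : 0 < s := Real.sqrt_pos.mpr (by norm_num)
  have hxy : (na : ℝ) + (nb : ℝ) = 4 := by
    rw [hadef] at hsum1 hsum2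
    rw [hbdef] at hsum1 hsum2
    linear_combination (-4 : ℝ) * hsum1 + 8 * hsum2 - (((na : ℝ) + (nb : ℝ)) / 2) * h3
  have h5 : ((nb : ℝ) - (na : ℝ)) * s = 0 := by
    rw [hadef] at hsum1
    rw [hbdef] at hsum1
    linear_combination 4 * hsum1 - hxy
  have hyx : (na : ℝ) = (nb : ℝ) := by
    rcases mul_eq_zero.mp h5 with h | h
    · linarith [sub_eq_zero.mp h]
    · exact absurd h hs0.ne'
  have hna : na = 2 := by
    have : (na : ℝ) = 2 := by linarith
    exact_mod_cast this
  have hnb : nb = 2 := by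
    have : (nb : ℝ) = 2 := by linarith
    exact_mod_cast this
  have hn0 : n0 = 4 := by omega
  calc M = M0 + (Ma + Mb) := hdec.symm
    _ = Multiset.replicate 4 (0 : ℝ) + Multiset.replicate 2 a + Multiset.replicate 2 b := by
        rw [h0, ha, hb, hna, hnb, hn0, add_assoc]

lemma habs : ∑ i, |ev i| = Real.sqrt 3 := by
  have h1 : (1 : ℝ) ≤ Real.sqrt 3 := by
    have := Real.sqrt_le_sqrt (by norm_num : (1 : ℝ) ≤ 3)
    simpa using this
  have hle : (1 - Real.sqrt 3) / 4 ≤ 0 := by linarith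
  have hge : (0 : ℝ) ≤ (1 + Real.sqrt 3) / 4 := by linarith
  have habsa : |(1 - Real.sqrt 3) / 4| = (Real.sqrt 3 - 1) / 4 := by
    rw [abs_of_nonpos hle]; ring
  have habsb : |(1 + Real.sqrt 3) / 4| = (Real.sqrt 3 + 1) / 4 := by
    rw [abs_of_nonneg hge]; ring
  have h2 : ∑ i, |ev i| = ((Finset.univ.val.map ev).map (fun x => |x|)).sum := by
    rw [Multiset.map_map, ← Finset.sum_eq_multiset_sum]
    simp [Function.comp]
  rw [h2, Mset]
  simp only [Multiset.map_add, Multiset.map_replicate, Multiset.sum_add,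
    Multiset.sum_replicate, habsa, habsb, abs_zero, nsmul_eq_mul]
  push_cast
  ring

lemma normT : traceNorm Tsinglet = Real.sqrt 3 := by
  classical
  set Dabs : Matrix (Fin 2 × Fin 2 × Fin 2) (Fin 2 × Fin 2 × Fin 2) ℂ :=
    Matrix.diagonal (fun i => ((|ev i| : ℝ) : ℂ)) with hDabs
  have hpsd : (U * Dabs * star U).PosSemidef := by
    rw [Matrix.star_eq_conjTranspose]
    exact Matrix.PosSemidef.mul_mul_conjTranspose_same
      (Matrix.posSemidef_diagonal_iff.mpr fun i => Complex.zero_le_real.mpr (abs_nonneg _)) U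
  have hsq : (U * Dabs * star U) ^ 2 = Tsingletᴴ * Tsinglet := by
    rw [pow_two, conjmul, Therm.eq, hspec, conjmul, D, hDabs, Matrix.diagonal_mul_diagonal,
      Matrix.diagonal_mul_diagonal]
    have harg : (fun i => ((|ev i| : ℝ) : ℂ) * ((|ev i| : ℝ) : ℂ)) = fun i => d i * d i := by
      funext j
      simp only [hd]
      rw [← Complex.ofReal_mul, ← Complex.ofReal_mul, abs_mul_abs_self]
    rw [harg]
  have hsqrtEq : matAbs Tsinglet = U * Dabs * star U := by
    have hH := (Matrix.posSemidef_conjTranspose_mul_self Tsinglet).1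
    have hsa : IsSelfAdjoint Tsinglet := Therm
    have hm : matAbs Tsinglet = cfc Real.sqrt (Tsingletᴴ * Tsinglet) := by
      rw [hH.cfc_eq, Matrix.IsHermitian.cfc, Unitary.conjStarAlgAut_apply]; rfl
    have h2 : Tsingletᴴ * Tsinglet = cfc (fun x : ℝ => x ^ 2) Tsinglet := by
      rw [cfc_pow_id Tsinglet 2 hsa, Therm.eq, pow_two]
    rw [hm, h2, ← cfc_comp Real.sqrt (fun x : ℝ => x ^ 2) Tsinglet hsa]
    have hf : (Real.sqrt ∘ fun x : ℝ => x ^ 2) = fun x => |x| :=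
      funext fun x => Real.sqrt_sq_eq_abs x
    rw [hf, Therm.cfc_eq, Matrix.IsHermitian.cfc, Unitary.conjStarAlgAut_apply]; rfl
  rw [traceNorm, hsqrtEq, Matrix.trace_mul_cycle, hU1, Matrix.one_mul, hDabs,
    Matrix.trace_diagonal, ← Complex.ofReal_sum, Complex.ofReal_re]
  exact habs

end SingletAux

open Singlet in
/-- The operator `T` of Eq. (A22) is a Hermitian `1×2`-setting source operator for the
two-qubit singlet state, its eigenvalues are `0` (multiplicity 4), `(1−√3)/4`
(multiplicity 2) and `(1+√3)/4` (multiplicity 2), and its trace norm equals `√3`. -/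
theorem singlet_source_operator :
    Tsinglet.IsHermitian ∧
      (∀ X₁ X₂ : Matrix (Fin 2) (Fin 2) ℂ,
        (Tsinglet * (X₁ ⊗ₖ (X₂ ⊗ₖ (1 : Matrix (Fin 2) (Fin 2) ℂ)))).trace
            = (ρsinglet * (X₁ ⊗ₖ X₂)).trace ∧
        (Tsinglet * (X₁ ⊗ₖ ((1 : Matrix (Fin 2) (Fin 2) ℂ) ⊗ₖ X₂))).trace
            = (ρsinglet * (X₁ ⊗ₖ X₂)).trace) ∧
      (∃ hT : Tsinglet.IsHermitian,
        (Finset.univ.val.map hT.eigenvalues : Multiset ℝ) =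
          Multiset.replicate 4 (0 : ℝ) +
            Multiset.replicate 2 ((1 - Real.sqrt 3) / 4) +
            Multiset.replicate 2 ((1 + Real.sqrt 3) / 4)) ∧
      traceNorm Tsinglet = Real.sqrt 3 := by
  refine ⟨SingletAux.Therm, fun X₁ X₂ => ⟨?_, ?_⟩,
    ⟨SingletAux.Therm, SingletAux.Mset⟩, SingletAux.normT⟩
  · rw [SingletAux.Tf, SingletAux.ρf]; exact SingletAux.traceA X₁ X₂
  · rw [SingletAux.Tf, SingletAux.ρf]; exact SingletAux.traceB X₁ X₂
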